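/- A directed graph E has strong finite ancestry (every pair of vertices has at most finitely many minimal ancestry pairs) if and only if E has finite ancestry (every pair of vertices has finitely many cycle-free minimal ancestry pairs) and E has no cycles. -/

import Mathlib

/-- A directed graph: edges `E`, vertices `V`, range and source maps. -/
structure DirGraph where
  V : Type
  E : Type
  r : E → V
  s : E → V

/-- Shift an infinite path (sequence of edges) by `p`. -/
def shift (p : ℕ) {α : Type} (x : ℕ → α) : ℕ → α := fun i => x (i + p)

namespace DirGraph

variable (G : DirGraph)

/-- `IsPath G v l u` : the list of edges `l` is a finite path with range `v` and
source `u` (edges are composed so that `s eᵢ = r eᵢ₊₁`). -/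
inductive IsPath : G.V → List G.E → G.V → Prop
  | nil (v : G.V) : IsPath v [] v
  | cons (e : G.E) {l : List G.E} {u : G.V} :
      IsPath (G.s e) l u → IsPath (G.r e) (e :: l) u

/-- An infinite path: a sequence of edges with `s(xᵢ) = r(xᵢ₊₁)`. -/
def InfPath (x : ℕ → G.E) : Prop := ∀ i, G.s (x i) = G.r (x (i + 1))

/-- Prepend a finite path (list of edges) to an infinite path. -/
def prepend (l : List G.E) (x : ℕ → G.E) : ℕ → G.E :=
  fun i => if h : i < l.length then l.get ⟨i, h⟩ else x (i - l.length)

/-- A cycle: a nonempty finite path with equal range and source. -/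
def IsCycle (c : List G.E) : Prop := c ≠ [] ∧ ∃ u, G.IsPath u c u

/-- A finite path contains a cycle if some (contiguous) subpath is a cycle. -/
def ContainsCycle (l : List G.E) : Prop :=
  ∃ p c q, l = p ++ c ++ q ∧ G.IsCycle c

/-- A simple cycle: a cycle containing no other cycle as a proper subpath. -/
def IsSimpleCycle (c : List G.E) : Prop :=
  G.IsCycle c ∧ ∀ p c' q, c = p ++ c' ++ q → G.IsCycle c' → c' = c

/-- A pair of finite paths is minimal if no nontrivial common final segment
can be factored out. -/
def Minimal (a b : List G.E) : Prop :=
  ∀ a' b' n, a = a' ++ n → b = b' ++ n → n = []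

/-- No cycle of `G` has an entrance: for every edge `f` on a cycle, `f` is the
only edge with range `r f`. -/
def NoCycleHasEntrance : Prop :=
  ∀ u c, G.IsCycle c → G.IsPath u c u → ∀ f ∈ c, ∀ e, G.r e = G.r f → e = f

/-- Row-finite: every vertex receives only finitely many edges. -/
def RowFinite : Prop := ∀ v, {e : G.E | G.r e = v}.Finite

/-- No sources: every vertex receives an edge. -/
def NoSources : Prop := ∀ v : G.V, ∃ e, G.r e = v

/-- Minimal cycle-free ancestry pair for the vertices `v, w`. -/
def MCFPair (v w : G.V) (a b : List G.E) : Prop :=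
  (∃ u, G.IsPath v a u ∧ G.IsPath w b u) ∧ G.Minimal a b ∧
    ¬G.ContainsCycle a ∧ ¬G.ContainsCycle b

end DirGraph

/-- A directed graph has strong finite ancestry (finitely many
minimal ancestry pairs for each pair of vertices) iff it has finite ancestry
(finitely many cycle-free minimal ancestry pairs for each pair of vertices) and
has no cycles. -/
theorem isPath_append {G : DirGraph} {v u w : G.V} {a b : List G.E}
    (ha : G.IsPath v a u) (hb : G.IsPath u b w) : G.IsPath v (a ++ b) w := by
  induction ha with
  | nil => exact hb
  | cons e _ ih => exact DirGraph.IsPath.cons e (ih hb)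

theorem isPath_join_replicate {G : DirGraph} {u : G.V} {c : List G.E}
    (hc : G.IsPath u c u) (n : ℕ) : G.IsPath u (List.replicate n c).flatten u := by
  induction n with
  | zero => exact DirGraph.IsPath.nil u
  | succ k ih =>
      rw [List.replicate_succ, List.flatten_cons]
      exact isPath_append hc ih

theorem strong_finite_ancestry_iff (G : DirGraph) :
    (∀ v w : G.V,
      {p : List G.E × List G.E |
        (∃ u, G.IsPath v p.1 u ∧ G.IsPath w p.2 u) ∧ G.Minimal p.1 p.2}.Finite) ↔
    ((∀ v w : G.V, {p : List G.E × List G.E | G.MCFPair v w p.1 p.2}.Finite) ∧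
      ¬∃ c : List G.E, G.IsCycle c) := by
  constructor
  · intro h
    constructor
    · intro v w
      exact (h v w).subset (fun p hp => ⟨hp.1, hp.2.1⟩)
    · rintro ⟨c, hne, u, hpath⟩
      have hinf : {p : List G.E × List G.E |
          (∃ u', G.IsPath u p.1 u' ∧ G.IsPath u p.2 u') ∧ G.Minimal p.1 p.2}.Infinite := by
        apply Set.infinite_of_injective_forall_mem
          (f := fun n : ℕ => ((List.replicate n c).flatten, ([] : List G.E)))
        · intro m n hmn
          have : (List.replicate m c).flatten.length = (List.replicate n c).flatten.length := by
            rw [(Prod.mk.injEq _ _ _ _).mp hmn |>.1]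
          simp only [List.length_flatten, List.map_replicate, List.sum_replicate, smul_eq_mul] at this
          have hc : 0 < c.length := List.length_pos_iff.mpr hne
          exact Nat.eq_of_mul_eq_mul_right hc this
        · intro n
          refine ⟨⟨u, isPath_join_replicate hpath n, DirGraph.IsPath.nil u⟩, ?_⟩
          intro a' b' m ha hb
          simp only at hb
          exact (List.nil_eq_append_iff.mp hb).2
      exact hinf (h u u)
  · rintro ⟨hfin, hnc⟩ v w
    apply (hfin v w).subset
    rintro ⟨a, b⟩ ⟨hu, hmin⟩
    refine ⟨hu, hmin, ?_, ?_⟩ <;>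
      · rintro ⟨p, c, q, -, hc⟩
        exact hnc ⟨c, hc⟩
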